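/- arXiv:2405.16768 — 5 statements merged into one kernel-verified Lean document; each statement's English description precedes it below -/
import Mathlib

section
/- Let 0 < R < H, a = √(H² − R²), and α = R/(H + a). For every z ∈ ℂ with |z + i·H| = R, one has |(z + i·a)/(z − i·a)| = α. (The forward conformal map sends the tunnel periphery onto the inner circle of radius α of the mapping annulus.) -/
open Complex

/-- The forward Verruijt conformal map `ζ(z) = (z + ia)/(z − ia)` sends the tunnel
periphery `{|z + iH| = R}` onto the inner circle of radius `α = R/(H + √(H² − R²))`
of the mapping annulus, where `a = √(H² − R²)` and `0 < R < H`. -/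
theorem tunnel_periphery_maps_to_inner_circle (R H : ℝ) (hR : 0 < R) (hRH : R < H)
    (a α : ℝ) (ha : a = Real.sqrt (H ^ 2 - R ^ 2)) (hα : α = R / (H + a)) :
    ∀ z : ℂ, ‖z + Complex.I * H‖ = R →
      ‖(z + Complex.I * a) / (z - Complex.I * a)‖ = α := by
  have hHR2 : (0:ℝ) ≤ H ^ 2 - R ^ 2 := by nlinarith
  have ha0 : 0 ≤ a := ha ▸ Real.sqrt_nonneg _
  have ha2 : a ^ 2 = H ^ 2 - R ^ 2 := by rw [ha, Real.sq_sqrt hHR2]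
  have haH : a < H := by nlinarith
  have hHa : 0 < H + a := by linarith
  intro z hz
  set x := z.re with hx
  set y := z.im with hy
  have hz2 : x ^ 2 + (y + H) ^ 2 = R ^ 2 := by
    have h := congrArg (· ^ 2) hz
    rw [Complex.sq_norm] at h
    simpa [Complex.normSq_apply, ← hx, ← hy, sq] using h
  have hylt : y < 0 := by nlinarith [sq_nonneg x, sq_nonneg (y + H - R)]
  have hp : ‖z + Complex.I * a‖ ^ 2 = 2 * (-y) * (H - a) := by
    rw [Complex.sq_norm]
    simp only [Complex.normSq_apply, Complex.add_re, Complex.add_im, Complex.mul_re,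
      Complex.mul_im, Complex.I_re, Complex.I_im, Complex.ofReal_re, Complex.ofReal_im]
    ring_nf
    nlinarith [hz2, ha2]
  have hm : ‖z - Complex.I * a‖ ^ 2 = 2 * (-y) * (H + a) := by
    rw [Complex.sq_norm]
    simp only [Complex.normSq_apply, Complex.sub_re, Complex.sub_im, Complex.mul_re,
      Complex.mul_im, Complex.I_re, Complex.I_im, Complex.ofReal_re, Complex.ofReal_im]
    ring_nf
    nlinarith [hz2, ha2]
  have hα0 : 0 ≤ α := by rw [hα]; exact div_nonneg hR.le hHa.le
  have hsq : ‖(z + Complex.I * a) / (z - Complex.I * a)‖ ^ 2 = α ^ 2 := by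
    rw [norm_div, div_pow, hp, hm, hα, div_pow]
    rw [div_eq_div_iff (by nlinarith) (by positivity)]
    linear_combination (2 * y * (H + a)) * ha2
  have hXnn : 0 ≤ ‖(z + Complex.I * a) / (z - Complex.I * a)‖ :=
    norm_nonneg _
  calc ‖(z + Complex.I * a) / (z - Complex.I * a)‖
      = Real.sqrt (‖(z + Complex.I * a) / (z - Complex.I * a)‖ ^ 2) :=
        (Real.sqrt_sq hXnn).symm
    _ = Real.sqrt (α ^ 2) := by rw [hsq]
    _ = α := Real.sqrt_sq hα0
end

section
/- Let 0 < R < H, a = √(H² − R²), and α = R/(H + a). The map z ↦ (z + i·a)/(z − i·a) is a bijection from the remaining geomaterial region {z ∈ ℂ : Im z ≤ 0 and R ≤ |z + i·H|} onto the punctured closed annulus {ζ ∈ ℂ : α ≤ |ζ| ≤ 1 and ζ ≠ 1}. -/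
open Complex

set_option maxHeartbeats 1000000 in
/-- The forward Verruijt conformal map `z ↦ (z + ia)/(z − ia)` is a bijection from the
remaining geomaterial region `{Im z ≤ 0, R ≤ |z + iH|}` onto the punctured closed annulus
`{α ≤ |ζ| ≤ 1, ζ ≠ 1}`, where `0 < R < H`, `a = √(H² − R²)` and `α = R/(H + a)`. -/
theorem remaining_geomaterial_bijects_annulus (R H : ℝ) (hR : 0 < R) (hRH : R < H)
    (a α : ℝ) (ha : a = Real.sqrt (H ^ 2 - R ^ 2)) (hα : α = R / (H + a)) :
    Set.BijOn (fun z : ℂ => (z + Complex.I * a) / (z - Complex.I * a))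
      {z : ℂ | z.im ≤ 0 ∧ R ≤ ‖z + Complex.I * H‖}
      {ζ : ℂ | α ≤ ‖ζ‖ ∧ ‖ζ‖ ≤ 1 ∧ ζ ≠ 1} := by
  have hH : 0 < H := hR.trans hRH
  have hH2R2 : 0 < H ^ 2 - R ^ 2 := by nlinarith
  have ha2 : a ^ 2 = H ^ 2 - R ^ 2 := by rw [ha, Real.sq_sqrt hH2R2.le]
  have hapos : 0 < a := by rw [ha]; exact Real.sqrt_pos.mpr hH2R2
  have hHa : (0:ℝ) < H + a := by linarith
  have hKey : a * (1 + α ^ 2) = H * (1 - α ^ 2) := by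
    rw [hα]; field_simp; nlinarith [ha2]
  have hα0 : 0 < α := by rw [hα]; positivity
  have hα1 : α < 1 := by rw [hα, div_lt_one hHa]; linarith
  have haC : (Complex.I * (a:ℂ)) ≠ 0 := by
    simp [Complex.I_ne_zero, Complex.ofReal_ne_zero, hapos.ne']
  -- the key equivalences
  have equiv : ∀ z : ℂ, z ≠ Complex.I * a →
      ((z.im ≤ 0 ↔ ‖(z + Complex.I * a) / (z - Complex.I * a)‖ ≤ 1) ∧
       (R ≤ ‖z + Complex.I * H‖ ↔
        α ≤ ‖(z + Complex.I * a) / (z - Complex.I * a)‖)) := by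
    intro z hz
    have hden : z - Complex.I * a ≠ 0 := sub_ne_zero.mpr hz
    have hdenpos : 0 < ‖z - Complex.I * a‖ := norm_pos_iff.mpr hden
    have n1 : Complex.normSq (z + Complex.I * a) = z.re ^ 2 + (z.im + a) ^ 2 := by
      simp [Complex.normSq_apply, Complex.add_re, Complex.add_im, Complex.mul_re,
        Complex.mul_im, Complex.I_re, Complex.I_im, Complex.ofReal_re, Complex.ofReal_im]
      ring
    have n2 : Complex.normSq (z - Complex.I * a) = z.re ^ 2 + (z.im - a) ^ 2 := by
      simp [Complex.normSq_apply, Complex.sub_re, Complex.sub_im, Complex.mul_re,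
        Complex.mul_im, Complex.I_re, Complex.I_im, Complex.ofReal_re, Complex.ofReal_im]
      ring
    have n3 : Complex.normSq (z + Complex.I * H) = z.re ^ 2 + (z.im + H) ^ 2 := by
      simp [Complex.normSq_apply, Complex.add_re, Complex.add_im, Complex.mul_re,
        Complex.mul_im, Complex.I_re, Complex.I_im, Complex.ofReal_re, Complex.ofReal_im]
      ring
    have habs : ‖(z + Complex.I * a) / (z - Complex.I * a)‖ =
        ‖z + Complex.I * a‖ / ‖z - Complex.I * a‖ := norm_div _ _
    have sq_iff : ∀ p q : ℝ, 0 ≤ p → 0 ≤ q → (p ≤ q ↔ p ^ 2 ≤ q ^ 2) := by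
      intro p q hp hq
      constructor
      · intro h; nlinarith
      · intro h; nlinarith
    constructor
    · rw [habs, div_le_one hdenpos,
        sq_iff _ _ (norm_nonneg _) (norm_nonneg _),
        Complex.sq_norm, Complex.sq_norm, n1, n2]
      constructor
      · intro h; nlinarith
      · intro h; nlinarith
    · rw [habs, le_div_iff₀ hdenpos,
        sq_iff R _ hR.le (norm_nonneg _),
        sq_iff (α * _) _ (by positivity) (norm_nonneg _),
        Complex.sq_norm, mul_pow, Complex.sq_norm, Complex.sq_norm, n1, n2, n3]
      have key2 : z.re ^ 2 + (z.im + a) ^ 2 - α ^ 2 * (z.re ^ 2 + (z.im - a) ^ 2) =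
          (1 - α ^ 2) * ((z.re ^ 2 + (z.im + H) ^ 2) - R ^ 2) := by
        linear_combination (2 * z.im) * hKey + (1 - α ^ 2) * ha2
      have h1α : 0 < 1 - α ^ 2 := by nlinarith
      constructor
      · intro h
        nlinarith [key2, mul_nonneg h1α.le (sub_nonneg.mpr h)]
      · intro h
        have hpos : 0 ≤ (1 - α ^ 2) * (z.re ^ 2 + (z.im + H) ^ 2 - R ^ 2) := by
          rw [← key2]; linarith
        nlinarith [hpos, h1α]
  set f : ℂ → ℂ := fun z : ℂ => (z + Complex.I * a) / (z - Complex.I * a) with hf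
  set g : ℂ → ℂ := fun ζ : ℂ => Complex.I * a * (ζ + 1) / (ζ - 1) with hg
  have mapsF : Set.MapsTo f {z : ℂ | z.im ≤ 0 ∧ R ≤ ‖z + Complex.I * H‖}
      {ζ : ℂ | α ≤ ‖ζ‖ ∧ ‖ζ‖ ≤ 1 ∧ ζ ≠ 1} := by
    rintro z ⟨h1, h2⟩
    have hz : z ≠ Complex.I * a := by
      intro h
      have : z.im = a := by rw [h]; simp
      linarith
    have hden : z - Complex.I * a ≠ 0 := sub_ne_zero.mpr hz
    refine ⟨(equiv z hz).2.mp h2, (equiv z hz).1.mp h1, ?_⟩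
    intro hone
    have h' : z + Complex.I * a = z - Complex.I * a := by
      have := (div_eq_one_iff_eq hden).mp hone
      exact this
    have h2' : (2 : ℂ) * (Complex.I * a) = 0 := by linear_combination h'
    simp [haC] at h2'
  have mapsG : Set.MapsTo g {ζ : ℂ | α ≤ ‖ζ‖ ∧ ‖ζ‖ ≤ 1 ∧ ζ ≠ 1}
      {z : ℂ | z.im ≤ 0 ∧ R ≤ ‖z + Complex.I * H‖} := by
    rintro ζ ⟨hl, hu, hne⟩
    have hζ1 : ζ - 1 ≠ 0 := sub_ne_zero.mpr hne
    have hz : g ζ ≠ Complex.I * a := by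
      intro h
      rw [hg] at h
      simp only at h
      rw [div_eq_iff hζ1] at h
      have h2' : (2 : ℂ) * (Complex.I * a) = 0 := by linear_combination h
      simp [haC] at h2'
    have hfg : f (g ζ) = ζ := by
      rw [hf]
      simp only
      rw [div_eq_iff (sub_ne_zero.mpr hz), hg]
      simp only
      field_simp
      ring
    refine ⟨(equiv (g ζ) hz).1.mpr ?_, (equiv (g ζ) hz).2.mpr ?_⟩
    · rw [show (g ζ + Complex.I * a) / (g ζ - Complex.I * a) = f (g ζ) from rfl, hfg]
      exact hu
    · rw [show (g ζ + Complex.I * a) / (g ζ - Complex.I * a) = f (g ζ) from rfl, hfg]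
      exact hl
  have invOn : Set.InvOn g f {z : ℂ | z.im ≤ 0 ∧ R ≤ ‖z + Complex.I * H‖}
      {ζ : ℂ | α ≤ ‖ζ‖ ∧ ‖ζ‖ ≤ 1 ∧ ζ ≠ 1} := by
    constructor
    · rintro z ⟨h1, _⟩
      have hz : z ≠ Complex.I * a := by
        intro h
        have : z.im = a := by rw [h]; simp
        linarith
      have hden : z - Complex.I * a ≠ 0 := sub_ne_zero.mpr hz
      have hone : f z - 1 ≠ 0 := by
        rw [hf]
        simp only
        intro h
        rw [sub_eq_zero, div_eq_one_iff_eq hden] at h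
        have h2' : (2 : ℂ) * (Complex.I * a) = 0 := by linear_combination h
        simp [haC] at h2'
      rw [hg]
      simp only
      rw [div_eq_iff hone, hf]
      simp only
      field_simp
      ring
    · rintro ζ ⟨hl, hu, hne⟩
      have hζ1 : ζ - 1 ≠ 0 := sub_ne_zero.mpr hne
      have hz : g ζ ≠ Complex.I * a := by
        intro h
        rw [hg] at h
        simp only at h
        rw [div_eq_iff hζ1] at h
        have h2' : (2 : ℂ) * (Complex.I * a) = 0 := by linear_combination h
        simp [haC] at h2'
      rw [hf]
      simp only
      rw [div_eq_iff (sub_ne_zero.mpr hz), hg]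
      simp only
      field_simp
      ring
  exact invOn.bijOn mapsF mapsG
end

section
/- Let G∞ > 0, G_E > 0 and η_E > 0 be real. Define G(t) = G∞ + G_E·exp(−(G_E/η_E)·t) and H_c(t) = (1/η_E)·(G_E/(G_E + G∞))²·exp(−(G_E/(G_E + G∞))·(G∞/η_E)·t). Then for every t ≥ 0: ∫₀ᵗ H_c(t − τ)·G(τ) dτ + G(t)/(G_E + G∞) = 1. (This is the statement that the kernel H of Eq. (2.16), consisting of the continuous part H_c plus the Dirac-delta part δ(t)/(G_E + G∞), satisfies H ∗ G ≡ 1, i.e. H is the inverse Laplace transform of 1/(T·Ĝ(T)).) -/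
/-- The creep kernel `H` of Eq. (2.16) (continuous part `H_c` plus Dirac-delta part
`δ(t)/(G_E + G∞)`) satisfies `H ∗ G ≡ 1` for the Poyting–Thomson relaxation modulus
`G(t) = G∞ + G_E exp(−(G_E/η_E) t)`: for every `t ≥ 0`,
`∫₀ᵗ H_c(t − τ) G(τ) dτ + G(t)/(G_E + G∞) = 1`. -/
theorem creep_kernel_convolution (Ginf GE ηE : ℝ)
    (hGinf : 0 < Ginf) (hGE : 0 < GE) (hη : 0 < ηE) :
    ∀ t : ℝ, 0 ≤ t →
      (∫ τ in (0:ℝ)..t,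
        (1 / ηE) * (GE / (GE + Ginf)) ^ 2 *
          Real.exp (-(GE / (GE + Ginf)) * (Ginf / ηE) * (t - τ)) *
          (Ginf + GE * Real.exp (-(GE / ηE) * τ)))
        + (Ginf + GE * Real.exp (-(GE / ηE) * t)) / (GE + Ginf) = 1 := by
  intro t ht
  have hS : (0:ℝ) < GE + Ginf := by positivity
  set a : ℝ := GE / (GE + Ginf) * (Ginf / ηE) with ha_def
  set b : ℝ := GE / ηE with hb_def
  have ha : (0:ℝ) < a := by positivity
  have habeq : a - b = -(GE / ηE * (GE / (GE + Ginf))) := by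
    rw [ha_def, hb_def]; field_simp; ring
  have hab : a - b ≠ 0 := by
    rw [habeq]
    have : (0:ℝ) < GE / ηE * (GE / (GE + Ginf)) := by positivity
    linarith
  set C : ℝ := 1 / ηE * (GE / (GE + Ginf)) ^ 2 with hC_def
  set F : ℝ → ℝ := fun τ =>
    C * Ginf / a * Real.exp (a * τ - a * t)
      + C * GE / (a - b) * Real.exp ((a - b) * τ - a * t) with hF_def
  have hderiv : ∀ τ ∈ Set.uIcc (0:ℝ) t, HasDerivAt F
      (C * Real.exp (-(GE / (GE + Ginf)) * (Ginf / ηE) * (t - τ)) *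
        (Ginf + GE * Real.exp (-(GE / ηE) * τ))) τ := by
    intro τ _
    have h1 : HasDerivAt (fun τ : ℝ => a * τ - a * t) a τ := by
      simpa using ((hasDerivAt_id τ).const_mul a).sub_const (a * t)
    have h2 : HasDerivAt (fun τ : ℝ => (a - b) * τ - a * t) (a - b) τ := by
      simpa using ((hasDerivAt_id τ).const_mul (a - b)).sub_const (a * t)
    have e1 := (Real.hasDerivAt_exp (a * τ - a * t)).comp τ h1
    have e2 := (Real.hasDerivAt_exp ((a - b) * τ - a * t)).comp τ h2
    have := ((e1.const_mul (C * Ginf / a)).add (e2.const_mul (C * GE / (a - b))))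
    refine this.congr_deriv ?_
    have key1 : Real.exp (-(GE / (GE + Ginf)) * (Ginf / ηE) * (t - τ)) =
        Real.exp (a * τ - a * t) := by
      congr 1; rw [ha_def]; ring
    have key2 : Real.exp (-(GE / (GE + Ginf)) * (Ginf / ηE) * (t - τ)) *
        Real.exp (-(GE / ηE) * τ) = Real.exp ((a - b) * τ - a * t) := by
      rw [← Real.exp_add]; congr 1; rw [ha_def, hb_def]; ring
    have hane : a ≠ 0 := ne_of_gt ha
    rw [← key1, ← key2]
    field_simp
  have hint : IntervalIntegrable (fun τ =>
      C * Real.exp (-(GE / (GE + Ginf)) * (Ginf / ηE) * (t - τ)) *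
        (Ginf + GE * Real.exp (-(GE / ηE) * τ))) MeasureTheory.volume 0 t := by
    apply Continuous.intervalIntegrable
    fun_prop
  have hval := intervalIntegral.integral_eq_sub_of_hasDerivAt hderiv hint
  rw [hval, hF_def]
  simp only [sub_self, Real.exp_zero, mul_zero, zero_sub]
  have hane : a ≠ 0 := ne_of_gt ha
  have hx : Real.exp ((a - b) * t - a * t) = Real.exp (-(GE / ηE) * t) := by
    congr 1; rw [hb_def]; ring
  rw [hx]
  have hk1 : C * Ginf / a = GE / (GE + Ginf) := by
    rw [hC_def, ha_def]; field_simp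
  have hk2 : C * GE / (a - b) = -(GE / (GE + Ginf)) := by
    rw [hC_def, habeq]; field_simp
  rw [hk1, hk2]
  field_simp
  ring_nf
  simp only [hb_def]
  ring_nf
end

section
/- Let κ > 0 be real and z_c ∈ ℂ. Then the function z ↦ ‖log(conj(z) − conj(z_c)) + κ·log(z − conj(z_c))‖, where log denotes the principal complex logarithm, tends to +∞ along the cobounded filter on ℂ (i.e. as ‖z‖ → ∞). (The logarithmic terms in the first line of the time-accumulative displacement of Eq. (2.19) produce a unique displacement singularity at infinity, so the traditional complex potentials with free ground surface violate the tunnel engineering fact of bounded far-field displacement.) -/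
open Complex Filter

/-- The logarithmic terms in the first line of the time-accumulative displacement of
Eq. (2.19) produce a unique displacement singularity at infinity: for `κ > 0` and any
`z_c ∈ ℂ`, the norm of `log(conj z − conj z_c) + κ·log(z − conj z_c)` tends to `+∞`
as `‖z‖ → ∞`. -/
theorem log_terms_displacement_singularity (κ : ℝ) (hκ : 0 < κ) (zc : ℂ) :
    Filter.Tendsto
      (fun z : ℂ =>
        ‖Complex.log (starRingEnd ℂ z - starRingEnd ℂ zc) +
          (κ : ℂ) * Complex.log (z - starRingEnd ℂ zc)‖)
      (Bornology.cobounded ℂ) Filter.atTop := by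
  have h1 : Tendsto (fun z : ℂ => ‖z - zc‖) (Bornology.cobounded ℂ) atTop := by
    refine tendsto_atTop_mono (fun z => ?_)
      (tendsto_atTop_add_const_right _ (-‖zc‖) tendsto_norm_cobounded_atTop)
    linarith [norm_sub_norm_le z zc]
  have h2 : Tendsto (fun z : ℂ => ‖z - starRingEnd ℂ zc‖) (Bornology.cobounded ℂ) atTop := by
    refine tendsto_atTop_mono (fun z => ?_)
      (tendsto_atTop_add_const_right _ (-‖starRingEnd ℂ zc‖) tendsto_norm_cobounded_atTop)
    linarith [norm_sub_norm_le z (starRingEnd ℂ zc)]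
  have hre : Tendsto (fun z : ℂ =>
      Real.log ‖z - zc‖ + κ * Real.log ‖z - starRingEnd ℂ zc‖)
      (Bornology.cobounded ℂ) atTop := by
    refine Filter.Tendsto.atTop_add_atTop (Real.tendsto_log_atTop.comp h1) ?_
    exact Tendsto.const_mul_atTop hκ (Real.tendsto_log_atTop.comp h2)
  refine tendsto_atTop_mono (fun z => ?_) hre
  have hconj : starRingEnd ℂ z - starRingEnd ℂ zc = starRingEnd ℂ (z - zc) := (map_sub _ _ _).symm
  have hres : (Complex.log (starRingEnd ℂ z - starRingEnd ℂ zc) +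
      (κ : ℂ) * Complex.log (z - starRingEnd ℂ zc)).re =
      Real.log ‖z - zc‖ + κ * Real.log ‖z - starRingEnd ℂ zc‖ := by
    rw [hconj]
    simp [Complex.add_re, Complex.log_re, Complex.mul_re, Complex.norm_conj]
    rw [hconj, Complex.norm_conj]
  calc Real.log ‖z - zc‖ + κ * Real.log ‖z - starRingEnd ℂ zc‖
      = (Complex.log (starRingEnd ℂ z - starRingEnd ℂ zc) +
        (κ : ℂ) * Complex.log (z - starRingEnd ℂ zc)).re := hres.symm
    _ ≤ _ := Complex.re_le_norm _
end

section
/- Let a > 0 be real, 0 < α < 1, and σ ∈ ℂ with |σ| = 1. Define z(ζ) = −i·a·(1 + ζ)/(1 − ζ) and z′(ζ) = −2·i·a/(1 − ζ)². Then the series with terms (1 − α²)²·α^k·σ^k (k = 0, 1, 2, …) has sum (z(σ/α) − z(α·σ))/conj(z′(α·σ)) + (1 − α²)·α·σ^{−1}. Equivalently, the Laurent coefficients e_k of (z(α^{−1}σ) − z(ασ))/conj(z′(ασ)) on the unit circle are e_{−1} = −(1 − α²)·α, e_k = (1 − α²)²·α^k for k ≥ 0, and e_{−k} = 0 for k ≥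 2. (Eq. (4.7).) -/
open Complex

/-- The backward Verruijt conformal mapping `z(ζ) = −ia(1 + ζ)/(1 − ζ)`. -/
noncomputable def zmap (a : ℝ) (ζ : ℂ) : ℂ := -Complex.I * a * (1 + ζ) / (1 - ζ)

/-- Its derivative `z′(ζ) = −2ia/(1 − ζ)²`. -/
noncomputable def zmap' (a : ℝ) (ζ : ℂ) : ℂ := -2 * Complex.I * a / (1 - ζ) ^ 2

/-- Eq. (4.7): for `σ` on the unit circle, the series `Σ_{k≥0} (1 − α²)² α^k σ^k`
has sum `(z(σ/α) − z(ασ))/conj(z′(ασ)) + (1 − α²) α σ⁻¹`; equivalently, the Laurent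
coefficients of `(z(α⁻¹σ) − z(ασ))/conj(z′(ασ))` are `e_{−1} = −(1 − α²)α`,
`e_k = (1 − α²)² α^k` for `k ≥ 0`, and `e_{−k} = 0` for `k ≥ 2`. -/
theorem laurent_expansion_eq_4_7 (a : ℝ) (ha : 0 < a) (α : ℝ)
    (hα0 : 0 < α) (hα1 : α < 1) (σ : ℂ) (hσ : ‖σ‖ = 1) :
    HasSum (fun k : ℕ => (((1 - α ^ 2) ^ 2 * α ^ k : ℝ) : ℂ) * σ ^ k)
      ((zmap a (σ / (α : ℂ)) - zmap a ((α : ℂ) * σ)) /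
          starRingEnd ℂ (zmap' a ((α : ℂ) * σ))
        + (((1 - α ^ 2) * α : ℝ) : ℂ) * σ⁻¹) := by
  have hσ0 : σ ≠ 0 := by
    intro h; rw [h] at hσ; simp at hσ
  have hα0' : (α : ℂ) ≠ 0 := by exact_mod_cast hα0.ne'
  have ha0 : (a : ℂ) ≠ 0 := by exact_mod_cast ha.ne'
  have habs : ‖(α : ℂ) * σ‖ = α := by
    rw [norm_mul, hσ, mul_one]; simp [abs_of_pos hα0]
  have h1 : (1 : ℂ) - (α : ℂ) * σ ≠ 0 := by
    intro h
    have h' : ‖(α : ℂ) * σ‖ = 1 := by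
      have h'' : (α : ℂ) * σ = 1 := by linear_combination -h
      rw [h'']; simp
    rw [habs] at h'; linarith
  have h2 : σ - (α : ℂ) ≠ 0 := by
    intro h
    have hσα : σ = (α : ℂ) := by linear_combination h
    rw [hσα] at hσ; simp [abs_of_pos hα0] at hσ; linarith
  have h3 : (1 : ℂ) - σ / (α : ℂ) ≠ 0 := by
    intro h
    apply h2
    have : σ / (α : ℂ) = 1 := by linear_combination -h
    field_simp at this
    rw [this]; ring
  have hconjσ : starRingEnd ℂ σ = σ⁻¹ := (Complex.inv_eq_conj hσ).symm
  have h2' : (α : ℂ) - σ ≠ 0 := fun h => h2 (by linear_combination -h)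
  have h4 : (1 : ℂ) - (α : ℂ) * σ⁻¹ ≠ 0 := by
    have he : (1 : ℂ) - (α : ℂ) * σ⁻¹ = (σ - (α : ℂ)) * σ⁻¹ := by
      field_simp
    rw [he]
    exact mul_ne_zero h2 (inv_ne_zero hσ0)
  have hz1 : zmap a (σ / (α : ℂ)) = -Complex.I * a * ((α : ℂ) + σ) / ((α : ℂ) - σ) := by
    unfold zmap
    rw [div_eq_div_iff h3 h2']
    field_simp
  -- conjugate of z'(ασ)
  have hc : starRingEnd ℂ (zmap' a ((α : ℂ) * σ)) =
      2 * Complex.I * a * σ ^ 2 / (σ - (α : ℂ)) ^ 2 := by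
    simp only [zmap', map_div₀, map_mul, map_pow, map_sub, map_one, map_neg, map_ofNat,
      Complex.conj_I, Complex.conj_ofReal, hconjσ]
    rw [div_eq_div_iff (pow_ne_zero 2 h4) (pow_ne_zero 2 h2)]
    field_simp
  have hcne : (2 : ℂ) * Complex.I * a * σ ^ 2 / (σ - (α : ℂ)) ^ 2 ≠ 0 := by
    apply div_ne_zero
    · exact mul_ne_zero (mul_ne_zero (mul_ne_zero two_ne_zero Complex.I_ne_zero) ha0)
        (pow_ne_zero 2 hσ0)
    · exact pow_ne_zero 2 h2
  -- the quotient
  have key : (zmap a (σ / (α : ℂ)) - zmap a ((α : ℂ) * σ)) /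
      starRingEnd ℂ (zmap' a ((α : ℂ) * σ)) =
      ((1 : ℂ) - (α : ℂ) ^ 2) * (σ - (α : ℂ)) / (σ * (1 - (α : ℂ) * σ)) := by
    rw [hc]
    have hmul : zmap a (σ / (α : ℂ)) - zmap a ((α : ℂ) * σ) =
        (((1 : ℂ) - (α : ℂ) ^ 2) * (σ - (α : ℂ)) / (σ * (1 - (α : ℂ) * σ))) *
          (2 * Complex.I * a * σ ^ 2 / (σ - (α : ℂ)) ^ 2) := by
      rw [hz1]; simp only [zmap]
      field_simp
      ring
    rw [hmul, mul_div_assoc, div_self hcne, mul_one]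
  rw [key]
  -- geometric series
  have hgeom : HasSum (fun k : ℕ => ((α : ℂ) * σ) ^ k) ((1 - (α : ℂ) * σ)⁻¹) :=
    hasSum_geometric_of_norm_lt_one (by rw [habs]; exact hα1)
  have h := hgeom.mul_left ((((1 - α ^ 2) ^ 2 : ℝ) : ℂ))
  have heq : (fun k : ℕ => (((1 - α ^ 2) ^ 2 : ℝ) : ℂ) * ((α : ℂ) * σ) ^ k)
      = fun k : ℕ => (((1 - α ^ 2) ^ 2 * α ^ k : ℝ) : ℂ) * σ ^ k := by
    funext k; push_cast; ring
  rw [heq] at h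
  convert h using 1
  case e'_6 =>
    push_cast
    field_simp
    ring
  all_goals rfl
end
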